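/- (No-programming, mixed programs) Let H_d and H_p be finite-dimensional complex Hilbert spaces, let G be a unitary operator on H_d ⊗ H_p, and let W, W' be unitary operators on H_d that are not phase-equivalent. Let ρ, ρ' be density operators on H_p, and suppose that for every unit vector ψ ∈ H_d there exist density operators σ_ψ, σ'_ψ on H_p such that G(|ψ⟩⟨ψ| ⊗ ρ)G† = (W|ψ⟩⟨ψ|W†) ⊗ σ_ψ and G(|ψ⟩⟨ψ| ⊗ ρ')G† = (W'|ψ⟩⟨ψ|W'†) ⊗ σ'_ψ. Then ρρ' = 0, i.e., ρ and ρ' have orthogonal support. -/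

import Mathlib

open Matrix
open Kronecker
open scoped ComplexOrder

noncomputable section

/-- The rank-one projection `|ψ⟩⟨ψ|` onto a (unit) vector `ψ`. -/
def outer {n : Type*} (x : n → ℂ) : Matrix n n ℂ :=
  Matrix.of fun i j => x i * star (x j)

/-- A density operator: positive semidefinite with unit trace. -/
def IsDensity {n : Type*} [Fintype n] (M : Matrix n n ℂ) : Prop :=
  M.PosSemidef ∧ M.trace = 1

/-- Two unitaries are phase-equivalent if they differ by a global phase `e^{iθ}`. -/
def PhaseEquiv {n : Type*} (W W' : Matrix n n ℂ) : Prop :=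
  ∃ θ : ℝ, W = Complex.exp (θ * Complex.I) • W'

namespace Stmt7Aux

variable {d p : Type*} [Fintype d] [Fintype p]

/-- Kronecker product of vectors. -/
def vecKron (x : d → ℂ) (y : p → ℂ) : d × p → ℂ := fun ik => x ik.1 * y ik.2

lemma dot_vecKron (x x' : d → ℂ) (y y' : p → ℂ) :
    star (vecKron x y) ⬝ᵥ vecKron x' y' = (star x ⬝ᵥ x') * (star y ⬝ᵥ y') := by
  simp only [dotProduct, vecKron, Pi.star_apply, Fintype.sum_prod_type, star_mul']
  rw [Finset.sum_mul_sum]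
  exact Finset.sum_congr rfl fun i _ => Finset.sum_congr rfl fun k _ => by ring

lemma kron_mulVec (A : Matrix d d ℂ) (B : Matrix p p ℂ) (x : d → ℂ) (y : p → ℂ) :
    (A ⊗ₖ B) *ᵥ vecKron x y = vecKron (A *ᵥ x) (B *ᵥ y) := by
  ext ⟨i, k⟩
  simp only [mulVec, dotProduct, vecKron, kroneckerMap_apply, Fintype.sum_prod_type]
  rw [Finset.sum_mul_sum]
  exact Finset.sum_congr rfl fun j _ => Finset.sum_congr rfl fun l _ => by ring

lemma outer_conj (W : Matrix d d ℂ) (ψ : d → ℂ) :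
    W * outer ψ * Wᴴ = outer (W *ᵥ ψ) := by
  ext i j
  simp only [outer, Matrix.mul_apply, Matrix.of_apply, conjTranspose_apply, mulVec, dotProduct,
    star_sum, star_mul', star_star, Finset.sum_mul, Finset.mul_sum]
  exact Finset.sum_congr rfl fun b _ => Finset.sum_congr rfl fun a _ => by ring

lemma outer_mulVec_self (ψ : d → ℂ) (h : star ψ ⬝ᵥ ψ = 1) : outer ψ *ᵥ ψ = ψ := by
  have : ∀ i, ψ i * (star ψ ⬝ᵥ ψ) = ψ i := fun i => by rw [h, mul_one]
  ext i
  simpa only [mulVec, dotProduct, outer, Matrix.of_apply, Pi.star_apply, Finset.mul_sum,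
    mul_assoc] using this i

lemma exists_kron_eq (w : d → ℂ) (σ : Matrix p p ℂ) (z : d × p → ℂ) :
    ∃ t, (outer w ⊗ₖ σ) *ᵥ z = vecKron w t := by
  refine ⟨fun k => ∑ jl : d × p, star (w jl.1) * σ k jl.2 * z jl, ?_⟩
  ext ⟨i, k⟩
  simp only [mulVec, dotProduct, vecKron, kroneckerMap_apply, outer, Matrix.of_apply,
    Finset.mul_sum]
  exact Finset.sum_congr rfl fun jl _ => by ring

lemma dot_mulVec_mulVec (A B : Matrix d d ℂ) (x y : d → ℂ) :
    star (A *ᵥ x) ⬝ᵥ (B *ᵥ y) = star x ⬝ᵥ ((Aᴴ * B) *ᵥ y) := by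
  rw [star_mulVec, dotProduct_mulVec, dotProduct_mulVec, vecMul_vecMul]

lemma dot_unitary {A : Matrix d d ℂ} [DecidableEq d] (hA : A ∈ Matrix.unitaryGroup d ℂ)
    (x y : d → ℂ) : star (A *ᵥ x) ⬝ᵥ (A *ᵥ y) = star x ⬝ᵥ y := by
  have h1 : Aᴴ * A = 1 := Matrix.mem_unitaryGroup_iff'.mp hA
  rw [dot_mulVec_mulVec, h1, one_mulVec]

lemma norm_one_of_dot (ψ : EuclideanSpace ℂ d) (h : star (ψ : d → ℂ) ⬝ᵥ (ψ : d → ℂ) = 1) :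
    ‖ψ‖ = 1 := by
  rw [EuclideanSpace.norm_eq]
  have key : ∀ z : ℂ, star z * z = ((‖z‖ : ℝ) : ℂ) ^ 2 := fun z => by
    rw [Complex.star_def, mul_comm, Complex.mul_conj]
    norm_cast
    rw [Complex.normSq_eq_norm_sq]
  have h2 : ((∑ i, ‖ψ i‖ ^ 2 : ℝ) : ℂ) = 1 := by
    rw [← h]
    push_cast
    exact (Finset.sum_congr rfl fun i _ => (key (ψ i)).symm)
  have h3 : (∑ i, ‖ψ i‖ ^ 2 : ℝ) = 1 := by exact_mod_cast h2
  rw [h3, Real.sqrt_one]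

lemma star_single [DecidableEq d] (i : d) :
    star (Pi.single i (1 : ℂ) : d → ℂ) = (Pi.single i 1 : d → ℂ) := by
  ext j
  by_cases h : j = i <;> simp [Pi.single_apply, h]

end Stmt7Aux

open Stmt7Aux

/-- No-programming, mixed programs: let `G` be a unitary on `H_d ⊗ H_p` and
`W, W'` unitaries on `H_d` that are not phase-equivalent.  If `ρ, ρ'` are density operators
on `H_p` such that for every unit `ψ ∈ H_d` there are density operators `σ_ψ, σ'_ψ` with
`G(|ψ⟩⟨ψ| ⊗ ρ)G† = (W|ψ⟩⟨ψ|W†) ⊗ σ_ψ` and `G(|ψ⟩⟨ψ| ⊗ ρ')G† = (W'|ψ⟩⟨ψ|W'†) ⊗ σ'_ψ`,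
then `ρρ' = 0`, i.e. `ρ` and `ρ'` have orthogonal support. -/
theorem stmt7 {d p : Type*} [Fintype d] [Fintype p] [DecidableEq d] [DecidableEq p]
    (G : Matrix (d × p) (d × p) ℂ) (hG : G ∈ Matrix.unitaryGroup (d × p) ℂ)
    (W W' : Matrix d d ℂ)
    (hW : W ∈ Matrix.unitaryGroup d ℂ) (hW' : W' ∈ Matrix.unitaryGroup d ℂ)
    (hne : ¬ PhaseEquiv W W')
    (ρ ρ' : Matrix p p ℂ) (hρ : IsDensity ρ) (hρ' : IsDensity ρ')
    (hprog : ∀ ψ : EuclideanSpace ℂ d, ‖ψ‖ = 1 →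
      ∃ σ σ' : Matrix p p ℂ, IsDensity σ ∧ IsDensity σ' ∧
        G * (outer ψ ⊗ₖ ρ) * Gᴴ = (W * outer ψ * Wᴴ) ⊗ₖ σ ∧
        G * (outer ψ ⊗ₖ ρ') * Gᴴ = (W' * outer ψ * W'ᴴ) ⊗ₖ σ') :
    ρ * ρ' = 0 := by
  classical
  by_contra hne0
  rcases isEmpty_or_nonempty d with hd | hd
  · exact hne ⟨0, by ext i j; exact isEmptyElim i⟩
  obtain ⟨i₀⟩ := hd
  -- pick a witness of non-orthogonality
  have hxe : ∃ x, ρ *ᵥ (ρ' *ᵥ x) ≠ 0 := by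
    by_contra hcon
    push_neg at hcon
    apply hne0
    ext i j
    have h1 := congrFun (hcon (Pi.single j 1)) i
    rw [mulVec_mulVec] at h1
    simpa [mulVec, dotProduct_single] using h1
  obtain ⟨x, hx⟩ := hxe
  set f : p → ℂ := ρ' *ᵥ x with hfdef
  set e : p → ℂ := ρ *ᵥ f with hedef
  have hρH : ρᴴ = ρ := hρ.1.1
  have hκ : star e ⬝ᵥ f ≠ 0 := by
    have h1 : star e ⬝ᵥ f = star f ⬝ᵥ (ρ *ᵥ f) := by
      rw [hedef, star_mulVec, hρH, ← dotProduct_mulVec]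
    rw [h1]
    intro h0
    exact hx ((hρ.1.dotProduct_mulVec_zero_iff f).mp h0)
  -- the core structural fact
  have core : ∀ ψ : d → ℂ, star ψ ⬝ᵥ ψ = 1 →
      ∃ t s : p → ℂ, G *ᵥ vecKron ψ e = vecKron (W *ᵥ ψ) t ∧
        G *ᵥ vecKron ψ f = vecKron (W' *ᵥ ψ) s := by
    intro ψ hψ
    obtain ⟨σ, σ', _, _, h1, h2⟩ := hprog (WithLp.toLp 2 ψ) (norm_one_of_dot (WithLp.toLp 2 ψ) hψ)
    rw [outer_conj] at h1 h2
    have hGG : Gᴴ * G = 1 := Matrix.mem_unitaryGroup_iff'.mp hG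
    have key : ∀ (τ : Matrix p p ℂ) (w : d → ℂ) (σ₀ : Matrix p p ℂ),
        G * (outer ψ ⊗ₖ τ) * Gᴴ = outer w ⊗ₖ σ₀ → ∀ u : p → ℂ,
        ∃ t, G *ᵥ vecKron ψ (τ *ᵥ u) = vecKron w t := by
      intro τ w σ₀ hEq u
      have hcomm : (outer w ⊗ₖ σ₀) * G = G * (outer ψ ⊗ₖ τ) := by
        rw [← hEq, Matrix.mul_assoc (G * (outer ψ ⊗ₖ τ)) Gᴴ G, hGG, Matrix.mul_one]
      have hv : vecKron ψ (τ *ᵥ u) = (outer ψ ⊗ₖ τ) *ᵥ vecKron ψ u := by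
        rw [kron_mulVec, outer_mulVec_self ψ hψ]
      have hG2 : G *ᵥ vecKron ψ (τ *ᵥ u) = (outer w ⊗ₖ σ₀) *ᵥ (G *ᵥ vecKron ψ u) := by
        rw [hv, mulVec_mulVec, mulVec_mulVec, hcomm]
      obtain ⟨t, htt⟩ := exists_kron_eq w σ₀ (G *ᵥ vecKron ψ u)
      exact ⟨t, hG2.trans htt⟩
    obtain ⟨t, htt⟩ := key ρ (W *ᵥ ψ) σ h1 f
    obtain ⟨s, hss⟩ := key ρ' (W' *ᵥ ψ) σ' h2 x
    exact ⟨t, s, htt, hss⟩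
  choose! t s ht hs using core
  -- basic inner-product identity
  have Idot : ∀ (ψ φ : d → ℂ) (a b : p → ℂ) (V V' : Matrix d d ℂ) (ta tb : p → ℂ),
      G *ᵥ vecKron ψ a = vecKron (V *ᵥ ψ) ta →
      G *ᵥ vecKron φ b = vecKron (V' *ᵥ φ) tb →
      (star ψ ⬝ᵥ φ) * (star a ⬝ᵥ b) = (star (V *ᵥ ψ) ⬝ᵥ (V' *ᵥ φ)) * (star ta ⬝ᵥ tb) := by
    intro ψ φ a b V V' ta tb hta htb
    calc (star ψ ⬝ᵥ φ) * (star a ⬝ᵥ b) = star (vecKron ψ a) ⬝ᵥ vecKron φ b :=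
          (dot_vecKron ψ φ a b).symm
    _ = star (G *ᵥ vecKron ψ a) ⬝ᵥ (G *ᵥ vecKron φ b) := (dot_unitary hG _ _).symm
    _ = star (vecKron (V *ᵥ ψ) ta) ⬝ᵥ vecKron (V' *ᵥ φ) tb := by rw [hta, htb]
    _ = _ := dot_vecKron _ _ _ _
  have I1 : ∀ ψ φ, star ψ ⬝ᵥ ψ = 1 → star φ ⬝ᵥ φ = 1 →
      (star ψ ⬝ᵥ φ) * (star e ⬝ᵥ e) = (star ψ ⬝ᵥ φ) * (star (t ψ) ⬝ᵥ t φ) := by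
    intro ψ φ hψ hφ
    have h := Idot ψ φ e e W W (t ψ) (t φ) (ht ψ hψ) (ht φ hφ)
    rwa [dot_unitary hW] at h
  have I2 : ∀ ψ φ, star ψ ⬝ᵥ ψ = 1 → star φ ⬝ᵥ φ = 1 →
      (star ψ ⬝ᵥ φ) * (star f ⬝ᵥ f) = (star ψ ⬝ᵥ φ) * (star (s ψ) ⬝ᵥ s φ) := by
    intro ψ φ hψ hφ
    have h := Idot ψ φ f f W' W' (s ψ) (s φ) (hs ψ hψ) (hs φ hφ)
    rwa [dot_unitary hW'] at h
  have I3 : ∀ ψ φ, star ψ ⬝ᵥ ψ = 1 → star φ ⬝ᵥ φ = 1 →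
      (star ψ ⬝ᵥ φ) * (star e ⬝ᵥ f)
        = (star ψ ⬝ᵥ ((Wᴴ * W') *ᵥ φ)) * (star (t ψ) ⬝ᵥ s φ) := by
    intro ψ φ hψ hφ
    have h := Idot ψ φ e f W W' (t ψ) (s φ) (ht ψ hψ) (hs φ hφ)
    rwa [dot_mulVec_mulVec W W' ψ φ] at h
  -- constancy of t and s
  have pairconst : ∀ (T : (d → ℂ) → (p → ℂ)) (v : p → ℂ),
      (∀ ψ φ, star ψ ⬝ᵥ ψ = 1 → star φ ⬝ᵥ φ = 1 →
        (star ψ ⬝ᵥ φ) * (star v ⬝ᵥ v) = (star ψ ⬝ᵥ φ) * (star (T ψ) ⬝ᵥ T φ)) →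
      ∀ ψ φ, star ψ ⬝ᵥ ψ = 1 → star φ ⬝ᵥ φ = 1 → star ψ ⬝ᵥ φ ≠ 0 → T ψ = T φ := by
    intro T v hI ψ φ hψ hφ hov
    have hTself : ∀ χ, star χ ⬝ᵥ χ = 1 → star (T χ) ⬝ᵥ T χ = star v ⬝ᵥ v := by
      intro χ hχ
      have h := hI χ χ hχ hχ
      rw [hχ, one_mul, one_mul] at h
      exact h.symm
    have h1 : star (T ψ) ⬝ᵥ T φ = star v ⬝ᵥ v :=
      (mul_left_cancel₀ hov (hI ψ φ hψ hφ)).symm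
    have h2 : star (T φ) ⬝ᵥ T ψ = star v ⬝ᵥ v := by
      rw [star_dotProduct, h1, ← star_dotProduct]
    have hz : star (T ψ - T φ) ⬝ᵥ (T ψ - T φ) = 0 := by
      rw [star_sub, sub_dotProduct, dotProduct_sub, dotProduct_sub,
        hTself ψ hψ, hTself φ hφ, h1, h2]
      ring
    exact sub_eq_zero.mp (dotProduct_star_self_eq_zero.mp hz)
  have conn : ∀ (T : (d → ℂ) → (p → ℂ)),
      (∀ ψ φ, star ψ ⬝ᵥ ψ = 1 → star φ ⬝ᵥ φ = 1 → star ψ ⬝ᵥ φ ≠ 0 → T ψ = T φ) →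
      ∀ ψ φ, star ψ ⬝ᵥ ψ = 1 → star φ ⬝ᵥ φ = 1 → T ψ = T φ := by
    intro T hT ψ φ hψ hφ
    by_cases hov : star ψ ⬝ᵥ φ ≠ 0
    · exact hT ψ φ hψ hφ hov
    push_neg at hov
    have hφψ : star φ ⬝ᵥ ψ = 0 := by rw [star_dotProduct, hov, star_zero]
    set c : ℂ := (((Real.sqrt 2)⁻¹ : ℝ) : ℂ) with hcdef
    have hcne : c ≠ 0 := by
      rw [hcdef]
      norm_cast
      positivity
    have hsc : star c = c := by rw [hcdef, Complex.star_def, Complex.conj_ofReal]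
    have hc2 : c * c = (2 : ℂ)⁻¹ := by
      have hr : (Real.sqrt 2)⁻¹ * (Real.sqrt 2)⁻¹ = (2:ℝ)⁻¹ := by
        rw [← mul_inv, Real.mul_self_sqrt (by norm_num : (0:ℝ) ≤ 2)]
      rw [hcdef, ← Complex.ofReal_mul, hr]
      push_cast
      norm_num
    set χ : d → ℂ := c • (ψ + φ) with hχdef
    have expand : ∀ u w : d → ℂ, star u ⬝ᵥ (c • w) = c * (star u ⬝ᵥ w) := by
      intro u w
      rw [dotProduct_smul, smul_eq_mul]
    have expand' : ∀ u w : d → ℂ, star (c • u) ⬝ᵥ w = c * (star u ⬝ᵥ w) := by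
      intro u w
      rw [star_smul, hsc, smul_dotProduct, smul_eq_mul]
    have hχunit : star χ ⬝ᵥ χ = 1 := by
      rw [hχdef, expand, expand', star_add, add_dotProduct, dotProduct_add, dotProduct_add,
        hψ, hφ, hov, hφψ]
      linear_combination (2:ℂ) * hc2
    have hψχ : star ψ ⬝ᵥ χ ≠ 0 := by
      rw [hχdef, expand, dotProduct_add, hψ, hov]
      simpa using hcne
    have hχφ : star χ ⬝ᵥ φ ≠ 0 := by
      rw [hχdef, expand', star_add, add_dotProduct, hφ, hov]
      simpa using hcne
    rw [hT ψ χ hψ hχunit hψχ, hT χ φ hχunit hφ hχφ]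
  have tconn := conn t (pairconst t e I1)
  have sconn := conn s (pairconst s f I2)
  -- unit basis vectors
  have hdotsingle : ∀ (i : d) (v : d → ℂ),
      star (Pi.single i (1:ℂ) : d → ℂ) ⬝ᵥ v = v i := fun i v => by
    rw [star_single, single_dotProduct, one_mul]
  have hsingle : ∀ i : d, star (Pi.single i (1:ℂ) : d → ℂ) ⬝ᵥ (Pi.single i 1 : d → ℂ) = 1 :=
    fun i => by rw [hdotsingle, Pi.single_eq_same]
  set ψ₀ : d → ℂ := Pi.single i₀ 1 with hψ₀def
  set κ : ℂ := star e ⬝ᵥ f with hκdef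
  set c₀ : ℂ := star (t ψ₀) ⬝ᵥ s ψ₀ with hc₀def
  have I3' : ∀ ψ φ, star ψ ⬝ᵥ ψ = 1 → star φ ⬝ᵥ φ = 1 →
      (star ψ ⬝ᵥ φ) * κ = (star ψ ⬝ᵥ ((Wᴴ * W') *ᵥ φ)) * c₀ := by
    intro ψ φ hψ hφ
    have h := I3 ψ φ hψ hφ
    rwa [tconn ψ ψ₀ hψ (hsingle i₀), sconn φ ψ₀ hφ (hsingle i₀)] at h
  have hc₀ne : c₀ ≠ 0 := by
    intro h0
    have h := I3' ψ₀ ψ₀ (hsingle i₀) (hsingle i₀)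
    rw [hsingle i₀, one_mul, h0, mul_zero] at h
    exact hκ h
  have hMij : ∀ i j, (Wᴴ * W') i j * c₀ = (if i = j then κ else 0) := by
    intro i j
    have h := I3' (Pi.single i 1) (Pi.single j 1) (hsingle i) (hsingle j)
    rw [hdotsingle i, hdotsingle i] at h
    have h1 : ((Wᴴ * W') *ᵥ (Pi.single j 1 : d → ℂ)) i = (Wᴴ * W') i j := by
      simp [mulVec, dotProduct_single]
    rw [h1] at h
    rw [← h, Pi.single_apply]
    by_cases hij : i = j <;> simp [hij]
  set α : ℂ := κ * c₀⁻¹ with hαdef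
  have hM : Wᴴ * W' = α • (1 : Matrix d d ℂ) := by
    ext i j
    have h := hMij i j
    rw [Matrix.smul_apply, Matrix.one_apply, smul_eq_mul]
    by_cases hij : i = j
    · rw [if_pos hij] at h ⊢
      rw [hαdef, mul_one]
      field_simp at h ⊢
      linear_combination h
    · rw [if_neg hij] at h ⊢
      rw [mul_zero]
      exact (mul_eq_zero.mp h).resolve_right hc₀ne
  have hWW : W * Wᴴ = 1 := Matrix.mem_unitaryGroup_iff.mp hW
  have hW'eq : W' = α • W := by
    have h1 : W * (Wᴴ * W') = W' := by rw [← Matrix.mul_assoc, hWW, Matrix.one_mul]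
    rw [← h1, hM, Matrix.mul_smul, Matrix.mul_one]
  have hαα : α * star α = 1 := by
    have h1 : W' * W'ᴴ = 1 := Matrix.mem_unitaryGroup_iff.mp hW'
    rw [hW'eq, Matrix.conjTranspose_smul, Matrix.smul_mul, Matrix.mul_smul, hWW,
      smul_smul] at h1
    have h2 : ((α * star α) • (1 : Matrix d d ℂ)) i₀ i₀ = (1 : Matrix d d ℂ) i₀ i₀ := by
      rw [h1]
    simpa using h2
  have hstar : star α * α = 1 := by rw [mul_comm]; exact hαα
  have habs : ‖star α‖ = 1 := by
    have hn : Complex.normSq α = 1 := by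
      have h := hαα
      rw [Complex.star_def, Complex.mul_conj] at h
      exact_mod_cast h
    rw [Complex.star_def, Complex.norm_conj, Complex.norm_def, hn, Real.sqrt_one]
  refine hne ⟨Complex.arg (star α), ?_⟩
  have hexp : Complex.exp (↑(Complex.arg (star α)) * Complex.I) = star α := by
    have h3 := Complex.norm_mul_exp_arg_mul_I (star α)
    rwa [habs, Complex.ofReal_one, one_mul] at h3
  rw [hexp, hW'eq, smul_smul, hstar, one_smul]

end
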